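/- Let A and B be C*-algebras and η : A → B a linear map that is compressible to a C*-subalgebra C ⊆ A on which η restricts to a bounded *-homomorphism. Then η is positive: for every a ∈ A with a ≥ 0, η(a) ≥ 0 in B; moreover η is a contraction: ‖η(a)‖ ≤ ‖a‖ for all a ∈ A. -/

import Mathlib

open scoped NNReal

/-- Auxiliary: the non-unital continuous functional calculus applied to an element of a
closed non-unital star subalgebra stays in the subalgebra. -/
lemma cfcn_mem_of_mem {A : Type*} [NonUnitalCStarAlgebra A] {C : NonUnitalStarSubalgebra ℂ A}
    (hC : IsClosed (C : Set A)) {a : A} (haC : a ∈ C) (ha : IsSelfAdjoint a)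
    (f : ℝ → ℝ) (hf : ContinuousOn f (quasispectrum ℝ a)) (hf0 : f 0 = 0) :
    cfcₙ f a ∈ C := by
  rw [cfcₙ_apply f a hf hf0]
  suffices hrange : Set.range (cfcₙHom (R := ℝ) ha) ⊆ (C : Set A) from
    hrange ⟨_, rfl⟩
  have hdense := ContinuousMapZero.adjoin_id_dense (s := quasispectrum ℝ a)
  refine ((cfcₙHom_isClosedEmbedding (R := ℝ) ha).continuous.range_subset_closure_image_dense
      hdense).trans ?_
  rw [← hC.closure_eq]
  refine closure_mono ?_
  rintro - ⟨g, hg, rfl⟩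
  induction hg using NonUnitalStarAlgebra.adjoin_induction with
  | mem g hg =>
      obtain rfl := Set.mem_singleton_iff.mp hg
      have hid : cfcₙHom (R := ℝ) ha (ContinuousMapZero.id (quasispectrum ℝ a)) = a := cfcₙHom_id ha
      rw [hid]
      exact haC
  | add g₁ g₂ _ _ h₁ h₂ => rw [map_add]; exact add_mem h₁ h₂
  | zero => rw [map_zero]; exact zero_mem C
  | mul g₁ g₂ _ _ h₁ h₂ => rw [map_mul]; exact mul_mem h₁ h₂
  | smul r g _ h =>
      rw [map_smul, ← algebraMap_smul ℂ r (cfcₙHom (R := ℝ) ha g)]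
      exact SMulMemClass.smul_mem _ h
  | star g _ h => rw [map_star]; exact star_mem h

set_option maxHeartbeats 1000000 in
/-- A linear map between C*-algebras which is compressible to a closed *-subalgebra `C`
on which it restricts to a bounded *-homomorphism is positive and contractive.
Positivity of elements is expressed in the C*-algebraic way: `0 ≤ a` iff
`a = star v * v` for some `v`. -/
theorem stmt_16 {A B : Type*} [NonUnitalCStarAlgebra A] [NonUnitalCStarAlgebra B]
    (C : NonUnitalStarSubalgebra ℂ A) (hC : IsClosed (C : Set A))
    (η : A →ₗ[ℂ] B)
    (hmul : ∀ x ∈ C, ∀ y ∈ C, η (x * y) = η x * η y)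
    (hstar : ∀ x ∈ C, η (star x) = star (η x))
    (hbdd : ∃ M : ℝ, ∀ c ∈ C, ‖η c‖ ≤ M * ‖c‖)
    (hcomp : ∀ a : A, ∀ ε > (0 : ℝ), ∃ φ₀ ∈ C, ∃ c ∈ C,
      η φ₀ = 0 ∧ ‖(1 : Unitization ℂ A) + φ₀‖ ≤ 1 ∧ η a = η c ∧
      ‖star ((1 : Unitization ℂ A) + φ₀) * (a : Unitization ℂ A) *
        ((1 : Unitization ℂ A) + φ₀) - (c : Unitization ℂ A)‖ ≤ ε) :
    (∀ a : A, (∃ v : A, a = star v * v) → ∃ w : B, η a = star w * w) ∧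
    (∀ a : A, ‖η a‖ ≤ ‖a‖) := by
  obtain ⟨M₀, hM₀⟩ := hbdd
  set M : ℝ := max M₀ 1 with hM_def
  have hM1 : (1 : ℝ) ≤ M := le_max_right _ _
  have hMpos : (0 : ℝ) < M := lt_of_lt_of_le one_pos hM1
  have hM : ∀ c ∈ C, ‖η c‖ ≤ M * ‖c‖ := fun c hc =>
    (hM₀ c hc).trans (mul_le_mul_of_nonneg_right (le_max_left _ _) (norm_nonneg _))
  haveI : IsClosed ((C : Set A)) := hC
  -- the restriction of `η` to `C`, as a star algebra homomorphism
  let ψ : C →⋆ₙₐ[ℂ] B :=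
    { toFun := fun x => η x
      map_smul' := fun r x => η.map_smul r x
      map_zero' := η.map_zero
      map_add' := fun x y => η.map_add x y
      map_mul' := fun x y => hmul x x.2 y y.2
      map_star' := fun x => hstar x x.2 }
  have hcontr : ∀ c ∈ C, ‖η c‖ ≤ ‖c‖ := fun c hc =>
    NonUnitalStarAlgHom.norm_apply_le ψ ⟨c, hc⟩
  constructor
  · -- positivity
    rintro a ⟨v, hv⟩
    -- key approximation step
    have key : ∀ δ : ℝ, 0 < δ → ∃ w : B, ‖η a - star w * w‖ ≤ δ := by
      intro δ hδ
      set ε : ℝ := δ / (2 * M) with hε_def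
      have hε : 0 < ε := by positivity
      obtain ⟨φ₀, hφ₀C, c, hcC, -, hφn, hac, happrox⟩ := hcomp a ε hε
      set U := Unitization ℂ A
      set φ : U := 1 + (φ₀ : U) with hφ_def
      set p : U := star φ * (a : U) * φ with hp_def
      set m : U := (v : U) * φ with hm_def
      have hpm : p = star m * m := by
        rw [hp_def, hm_def, hv]
        simp only [Unitization.inr_mul, Unitization.inr_star, star_mul, mul_assoc]
      have hp_sa : star p = p := by rw [hpm]; exact (IsSelfAdjoint.star_mul_self m).star_eq
      set d : U := (c : U) - p with hd_def
      have hd : ‖d‖ ≤ ε := by rw [hd_def, norm_sub_rev]; exact happrox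
      set x : A := (2⁻¹ : ℂ) • (c + star c) with hx_def
      have hxC : x ∈ C := SMulMemClass.smul_mem _ (add_mem hcC (star_mem hcC))
      have hx_sa : IsSelfAdjoint x := by
        rw [hx_def, isSelfAdjoint_iff, star_smul, star_add, star_star]
        congr 1
        · simp
        · exact add_comm _ _
      have hhalf : ‖(2⁻¹ : ℂ)‖ = 2⁻¹ := by simp
      have hxU : (x : U) = (2⁻¹ : ℂ) • ((c : U) + star ((c : U))) := by
        rw [hx_def]
        simp [Unitization.inr_smul, Unitization.inr_add, Unitization.inr_star]
      have hstar_d : star d = star ((c : U)) - p := by rw [hd_def, star_sub, hp_sa]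
      have h1 : (x : U) - p = (2⁻¹ : ℂ) • (d + star d) := by
        rw [hxU, hstar_d, hd_def]
        module
      have h1' : ‖(x : U) - p‖ ≤ ε := by
        rw [h1, norm_smul, hhalf]
        calc (2⁻¹ : ℝ) * ‖d + star d‖ ≤ 2⁻¹ * (‖d‖ + ‖star d‖) := by
              gcongr; exact norm_add_le _ _
          _ = 2⁻¹ * (‖d‖ + ‖d‖) := by rw [norm_star]
          _ ≤ 2⁻¹ * (ε + ε) := by gcongr
          _ = ε := by ring
      have h2 : ‖c - x‖ ≤ ε := by
        have h2' : ((c : A) : U) - (x : U) = (2⁻¹ : ℂ) • (d - star d) := by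
          rw [hxU, hstar_d, hd_def]
          module
        rw [← Unitization.norm_inr (𝕜 := ℂ), Unitization.inr_sub, h2', norm_smul, hhalf]
        calc (2⁻¹ : ℝ) * ‖d - star d‖ ≤ 2⁻¹ * (‖d‖ + ‖star d‖) := by
              gcongr; exact norm_sub_le _ _
          _ = 2⁻¹ * (‖d‖ + ‖d‖) := by rw [norm_star]
          _ ≤ 2⁻¹ * (ε + ε) := by gcongr
          _ = ε := by ring
      -- spectrum of `x` is bounded below by `-ε`
      letI : PartialOrder U := CStarAlgebra.spectralOrder _
      letI : StarOrderedRing U := CStarAlgebra.spectralOrderedRing _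
      have alg_nonneg : ∀ r : ℝ, 0 ≤ r → 0 ≤ algebraMap ℝ U r := by
        intro r hr
        have h := star_mul_self_nonneg (algebraMap ℝ U (Real.sqrt r))
        rwa [(IsSelfAdjoint.algebraMap U (IsSelfAdjoint.all (Real.sqrt r))).star_eq,
          ← map_mul, Real.mul_self_sqrt hr] at h
      have hp_nonneg : (0 : U) ≤ p := hpm ▸ star_mul_self_nonneg m
      have hx_sa_inr : IsSelfAdjoint ((x : U)) := hx_sa.inr ℂ
      have hxp_sa : IsSelfAdjoint ((x : U) - p) := by
        rw [isSelfAdjoint_iff, star_sub, hp_sa, hx_sa_inr.star_eq]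
      have hd_le : - algebraMap ℝ U ‖(x : U) - p‖ ≤ (x : U) - p :=
        IsSelfAdjoint.neg_algebraMap_norm_le_self hxp_sa
      have hx_nonneg : (0 : U) ≤ algebraMap ℝ U ε + (x : U) := by
        have t1 : (0 : U) ≤ ((x : U) - p) + algebraMap ℝ U ‖(x : U) - p‖ := by
          have h := add_le_add_right hd_le (algebraMap ℝ U ‖(x : U) - p‖)
          exact neg_le_iff_add_nonneg.mp hd_le
        have t3 : (0 : U) ≤ algebraMap ℝ U (ε - ‖(x : U) - p‖) :=
          alg_nonneg _ (by linarith [h1'])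
        have keyeq : algebraMap ℝ U ε + (x : U) =
            (((x : U) - p) + algebraMap ℝ U ‖(x : U) - p‖) + p
              + algebraMap ℝ U (ε - ‖(x : U) - p‖) := by
          rw [map_sub]; abel
        rw [keyeq]
        exact add_nonneg (add_nonneg t1 hp_nonneg) t3
      have hspec : ∀ t ∈ spectrum ℝ ((x : U)), -ε ≤ t := by
        intro t ht
        have hmem : ε + t ∈ spectrum ℝ (algebraMap ℝ U ε + (x : U)) := by
          rw [← spectrum.singleton_add_eq]
          exact Set.add_mem_add rfl ht
        have := spectrum_nonneg_of_nonneg hx_nonneg hmem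
        linarith
      have hqspec : ∀ t ∈ quasispectrum ℝ x, -ε ≤ t := by
        rw [Unitization.quasispectrum_eq_spectrum_inr' ℝ ℂ x]
        exact hspec
      -- decompose `x` using the functional calculus
      have hg_cont : ContinuousOn (fun t : ℝ => Real.sqrt (max t 0)) (quasispectrum ℝ x) :=
        (Real.continuous_sqrt.comp (continuous_id.max continuous_const)).continuousOn
      have hg0 : Real.sqrt (max 0 0) = 0 := by simp
      set w₀ : A := cfcₙ (fun t : ℝ => Real.sqrt (max t 0)) x with hw₀_def
      set xneg : A := cfcₙ (fun t : ℝ => max (-t) 0) x with hxneg_def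
      have hw₀C : w₀ ∈ C := cfcn_mem_of_mem hC hxC hx_sa _ hg_cont (by simp)
      have hw₀_sa : IsSelfAdjoint w₀ := cfcₙ_predicate _ x
      have hdecomp : w₀ * w₀ - xneg = x := by
        rw [hw₀_def, hxneg_def,
          ← cfcₙ_mul (fun t : ℝ => Real.sqrt (max t 0)) (fun t : ℝ => Real.sqrt (max t 0)) x
            hg_cont (by simp) hg_cont (by simp),
          ← cfcₙ_sub (fun t : ℝ => Real.sqrt (max t 0) * Real.sqrt (max t 0))
            (fun t : ℝ => max (-t) 0) x
            (hg_cont.mul hg_cont) (by simp)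
            ((continuous_neg.max continuous_const).continuousOn) (by simp)]
        have hfun : (fun t : ℝ => Real.sqrt (max t 0) * Real.sqrt (max t 0) - max (-t) 0)
            = fun t : ℝ => t := by
          funext t
          rw [Real.mul_self_sqrt (le_max_right t 0)]
          rcases le_total 0 t with h | h
          · rw [max_eq_left h, max_eq_right (by linarith)]; ring
          · rw [max_eq_right h, max_eq_left (by linarith)]; ring
        rw [hfun, cfcₙ_id' ℝ x]
      have hxnegC : xneg ∈ C := by
        have : xneg = w₀ * w₀ - x := by rw [← hdecomp]; abel
        rw [this]
        exact sub_mem (mul_mem hw₀C hw₀C) hxC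
      have hxneg_norm : ‖xneg‖ ≤ ε := by
        rw [hxneg_def]
        refine norm_cfcₙ_le fun t ht => ?_
        have := hqspec t ht
        rw [Real.norm_eq_abs, abs_of_nonneg (le_max_right _ _)]
        exact max_le (by linarith) hε.le
      -- assemble
      refine ⟨η w₀, ?_⟩
      have hsw : star (η w₀) = η w₀ := by
        rw [← hstar w₀ hw₀C, hw₀_sa.star_eq]
      have hηx : η x = η w₀ * η w₀ - η xneg := by
        conv_lhs => rw [← hdecomp]
        rw [map_sub, hmul w₀ hw₀C w₀ hw₀C]
      have hkey : η a - star (η w₀) * η w₀ = η (c - x) - η xneg := by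
        rw [hsw, hac, map_sub, hηx]
        abel
      rw [hkey]
      calc ‖η (c - x) - η xneg‖ ≤ ‖η (c - x)‖ + ‖η xneg‖ := norm_sub_le _ _
        _ ≤ M * ‖c - x‖ + M * ‖xneg‖ := add_le_add (hM _ (sub_mem hcC hxC)) (hM _ hxnegC)
        _ ≤ M * ε + M * ε := by gcongr
        _ = δ := by rw [hε_def]; field_simp; ring
    -- from the key approximation, conclude positivity
    set b : B := η a with hb_def
    have hb_sa : IsSelfAdjoint b := by
      rw [isSelfAdjoint_iff, ← sub_eq_zero, ← norm_eq_zero]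
      have hle : ∀ δ : ℝ, 0 < δ → ‖star b - b‖ ≤ δ := by
        intro δ hδ
        obtain ⟨w, hw⟩ := key (δ / 2) (by positivity)
        have hq_sa : star (star w * w) = star w * w := (IsSelfAdjoint.star_mul_self w).star_eq
        have : star b - b = star (b - star w * w) - (b - star w * w) := by
          rw [star_sub, hq_sa]; abel
        rw [this]
        calc ‖star (b - star w * w) - (b - star w * w)‖
            ≤ ‖star (b - star w * w)‖ + ‖b - star w * w‖ := norm_sub_le _ _
          _ = ‖b - star w * w‖ + ‖b - star w * w‖ := by rw [norm_star]
          _ ≤ δ / 2 + δ / 2 := add_le_add hw hw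
          _ = δ := by ring
      have h0 : ‖star b - b‖ ≤ 0 := le_of_forall_pos_le_add (by simpa using fun ε hε => hle ε hε)
      exact le_antisymm h0 (norm_nonneg _)
    -- show the quasispectrum of `b` is nonnegative
    set V := Unitization ℂ B
    set z : V := (b : V) with hz_def
    have hz_sa : IsSelfAdjoint z := hb_sa.inr ℂ
    have hnorm_key : ‖algebraMap ℝ V ‖z‖ - z‖ ≤ ‖z‖ := by
      refine le_of_forall_pos_le_add fun δ hδ => ?_
      obtain ⟨w, hw⟩ := key (δ / 3) (by positivity)
      set zq : V := star ((w : V)) * (w : V) with hzq_def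
      have hzq_sa : IsSelfAdjoint zq := .star_mul_self _
      have hzq_sr : SpectrumRestricts zq ContinuousMap.realToNNReal :=
        SpectrumRestricts.nnreal_iff.mpr (spectrum_star_mul_self_nonneg (b := (w : V)))
      have hzq_norm : ‖algebraMap ℝ V ‖zq‖ - zq‖ ≤ ‖zq‖ := by
        have h := (SpectrumRestricts.nnreal_iff_nnnorm hzq_sa le_rfl).mp hzq_sr
        have h' := (NNReal.coe_le_coe).mpr h
        simpa [coe_nnnorm] using h'
      have hdist : ‖z - zq‖ ≤ δ / 3 := by
        have : z - zq = ((b - star w * w : B) : V) := by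
          rw [hz_def, hzq_def, Unitization.inr_sub, Unitization.inr_mul, Unitization.inr_star]
        rw [this, Unitization.norm_inr]
        exact hw
      have hzqz : ‖zq‖ ≤ ‖z‖ + δ / 3 := by
        calc ‖zq‖ ≤ ‖z‖ + ‖zq - z‖ := by
              have := norm_add_le (z) (zq - z); simpa using this
          _ ≤ ‖z‖ + δ / 3 := by rw [norm_sub_rev] at hdist; gcongr
      calc ‖algebraMap ℝ V ‖z‖ - z‖
          ≤ ‖algebraMap ℝ V ‖z‖ - algebraMap ℝ V ‖zq‖‖ + ‖algebraMap ℝ V ‖zq‖ - zq‖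
              + ‖zq - z‖ := by
            have h3 := norm_add₃_le (a := algebraMap ℝ V ‖z‖ - algebraMap ℝ V ‖zq‖)
              (b := algebraMap ℝ V ‖zq‖ - zq) (c := zq - z)
            simpa using h3
        _ ≤ δ / 3 + (‖z‖ + δ / 3) + δ / 3 := by
            refine add_le_add (add_le_add ?_ (hzq_norm.trans hzqz)) ?_
            · rw [← map_sub, norm_algebraMap']
              calc ‖‖z‖ - ‖zq‖‖ ≤ ‖z - zq‖ := by
                    rw [Real.norm_eq_abs]; exact abs_norm_sub_norm_le _ _
                _ ≤ δ / 3 := hdist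
            · rw [norm_sub_rev]; exact hdist
        _ = ‖z‖ + δ := by ring
    have hz_sr : SpectrumRestricts z ContinuousMap.realToNNReal := by
      refine (SpectrumRestricts.nnreal_iff_nnnorm hz_sa le_rfl).mpr ?_
      rw [← NNReal.coe_le_coe]
      simpa [coe_nnnorm] using hnorm_key
    have hbq : ∀ t ∈ quasispectrum ℝ b, 0 ≤ t := by
      rw [Unitization.quasispectrum_eq_spectrum_inr' ℝ ℂ b]
      exact SpectrumRestricts.nnreal_iff.mp hz_sr
    -- construct the square root
    refine ⟨cfcₙ Real.sqrt b, ?_⟩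
    have hsqrt_sa : IsSelfAdjoint (cfcₙ Real.sqrt b) := cfcₙ_predicate _ b
    rw [hsqrt_sa.star_eq,
      ← cfcₙ_mul Real.sqrt Real.sqrt b Real.continuous_sqrt.continuousOn (by simp)
        Real.continuous_sqrt.continuousOn (by simp)]
    have : cfcₙ (fun t : ℝ => Real.sqrt t * Real.sqrt t) b = cfcₙ (fun t : ℝ => t) b := by
      refine cfcₙ_congr fun t ht => ?_
      exact Real.mul_self_sqrt (hbq t ht)
    rw [this, cfcₙ_id' ℝ b]
  · -- contractivity
    intro a
    refine le_of_forall_pos_le_add fun ε hε => ?_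
    obtain ⟨φ₀, hφ₀C, c, hcC, -, hφn, hac, happrox⟩ := hcomp a ε hε
    set U := Unitization ℂ A
    set φ : U := 1 + (φ₀ : U) with hφ_def
    set p : U := star φ * (a : U) * φ with hp_def
    have hnp : ‖p‖ ≤ ‖a‖ := by
      calc ‖p‖ ≤ ‖star φ * (a : U)‖ * ‖φ‖ := norm_mul_le _ _
        _ ≤ ‖star φ‖ * ‖(a : U)‖ * ‖φ‖ := by gcongr; exact norm_mul_le _ _
        _ = ‖φ‖ * ‖a‖ * ‖φ‖ := by rw [norm_star, Unitization.norm_inr]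
        _ ≤ 1 * ‖a‖ * 1 := by gcongr
        _ = ‖a‖ := by ring
    calc ‖η a‖ = ‖η c‖ := by rw [hac]
      _ ≤ ‖c‖ := hcontr c hcC
      _ = ‖(c : U)‖ := (Unitization.norm_inr _).symm
      _ = ‖p - (p - (c : U))‖ := by rw [sub_sub_cancel]
      _ ≤ ‖p‖ + ‖p - (c : U)‖ := norm_sub_le _ _
      _ ≤ ‖a‖ + ε := add_le_add hnp happrox
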